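/- arXiv:1111.6094 — 2 statements merged into one kernel-verified Lean document; each statement's English description precedes it below -/
import Mathlib

section
/- Let A be a q-positive subset of an SSD space B. Then A is q-representable if and only if P_q(Φ_A^@) ⊆ A. -/
noncomputable section

variable {B : Type*} [AddCommGroup B] [Module ℝ B]

/-- The quadratic form `q(x) = ½⌊x,x⌋` associated to the bilinear form `br`. -/
def qQ (br : B →ₗ[ℝ] B →ₗ[ℝ] ℝ) (x : B) : ℝ := (1 / 2) * br x x

/-- `A` is `q`-positive: nonempty and `q(b - c) ≥ 0` for all `b, c ∈ A`. -/
def IsQPositive (br : B →ₗ[ℝ] B →ₗ[ℝ] ℝ) (A : Set B) : Prop :=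
  A.Nonempty ∧ ∀ b ∈ A, ∀ c ∈ A, 0 ≤ qQ br (b - c)

/-- `A^π`, the set of points `q`-positively related to `A`. -/
def qPi (br : B →ₗ[ℝ] B →ₗ[ℝ] ℝ) (A : Set B) : Set B :=
  {b : B | ∀ a ∈ A, 0 ≤ qQ br (b - a)}

/-- `A` is maximally `q`-positive. -/
def IsMaxQPositive (br : B →ₗ[ℝ] B →ₗ[ℝ] ℝ) (A : Set B) : Prop :=
  IsQPositive br A ∧ ∀ C : Set B, IsQPositive br C → A ⊆ C → C = A

/-- The generalized Fitzpatrick function `Φ_A(x) = sup_{a ∈ A} (⌊x,a⌋ - q(a))`. -/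
def PhiF (br : B →ₗ[ℝ] B →ₗ[ℝ] ℝ) (A : Set B) (x : B) : EReal :=
  ⨆ a ∈ A, ((br x a - qQ br a : ℝ) : EReal)

/-- The intrinsic conjugate `f^@(b) = sup_{c ∈ B} (⌊c,b⌋ - f(c))`. -/
def intrinsicConj (br : B →ₗ[ℝ] B →ₗ[ℝ] ℝ) (f : B → EReal) (b : B) : EReal :=
  ⨆ c : B, ((br c b : ℝ) : EReal) - f c

/-- `P_q(f) = {b : f(b) = q(b)}`. -/
def PqSet (br : B →ₗ[ℝ] B →ₗ[ℝ] ℝ) (f : B → EReal) : Set B :=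
  {b : B | f b = ((qQ br b : ℝ) : EReal)}

/-- `G_f = {b : f(b) + f^@(b) = ⌊b,b⌋}`. -/
def GSet (br : B →ₗ[ℝ] B →ₗ[ℝ] ℝ) (f : B → EReal) : Set B :=
  {b : B | f b + intrinsicConj br f b = ((br b b : ℝ) : EReal)}

/-- Convexity for `ℝ ∪ {+∞}`-valued functions. -/
def ConvexE (f : B → EReal) : Prop :=
  ∀ x y : B, ∀ α β : ℝ, 0 ≤ α → 0 ≤ β → α + β = 1 →
    f (α • x + β • y) ≤ (α : EReal) * f x + (β : EReal) * f y

/-- The weak topology `w(B,B)` induced by the functionals `⌊·,b⌋`, `b ∈ B`. -/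
def weakTop (br : B →ₗ[ℝ] B →ₗ[ℝ] ℝ) : TopologicalSpace B :=
  ⨅ b : B, TopologicalSpace.induced (fun x => br x b) inferInstance

/-- Lower semicontinuity with respect to the weak topology `w(B,B)`. -/
def LscW (br : B →ₗ[ℝ] B →ₗ[ℝ] ℝ) (f : B → EReal) : Prop :=
  @LowerSemicontinuous B EReal (weakTop br) _ f

/-- `A` is `q`-representable: it has a `w(B,B)`-lsc proper convex `q`-representation. -/
def IsQRepresentable (br : B →ₗ[ℝ] B →ₗ[ℝ] ℝ) (A : Set B) : Prop :=
  ∃ f : B → EReal, LscW br f ∧ ConvexE f ∧ (∃ x, f x ≠ ⊤) ∧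
    (∀ x, ((qQ br x : ℝ) : EReal) ≤ f x) ∧ PqSet br f = A


open Filter Set Topology

section Aux

variable {B : Type*} [AddCommGroup B] [Module ℝ B]
variable (br : B →ₗ[ℝ] B →ₗ[ℝ] ℝ) {A : Set B}

lemma qQ_sub (hsym : ∀ x y : B, br x y = br y x) (x y : B) :
    qQ br (x - y) = qQ br x - br x y + qQ br y := by
  simp only [qQ, map_sub, LinearMap.sub_apply]
  rw [hsym y x]; ring

lemma le_PhiF {a : B} (ha : a ∈ A) (x : B) :
    ((br x a - qQ br a : ℝ) : EReal) ≤ PhiF br A x :=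
  le_iSup₂ (f := fun a (_ : a ∈ A) => ((br x a - qQ br a : ℝ) : EReal)) a ha

lemma PhiF_ne_bot (hne : A.Nonempty) (x : B) : PhiF br A x ≠ ⊥ := by
  obtain ⟨a, ha⟩ := hne
  exact fun h => EReal.coe_ne_bot _ (eq_bot_iff.2 (h ▸ le_PhiF br ha x) : _)

lemma PhiF_on_A (hsym : ∀ x y : B, br x y = br y x)
    (hpos : ∀ b ∈ A, ∀ c ∈ A, 0 ≤ qQ br (b - c)) {a : B} (ha : a ∈ A) :
    PhiF br A a = ((qQ br a : ℝ) : EReal) := by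
  refine le_antisymm (iSup₂_le fun c hc => ?_) ?_
  · rw [EReal.coe_le_coe_iff]
    have := hpos a ha c hc
    rw [qQ_sub br hsym] at this
    linarith
  · have h2 : br a a - qQ br a = qQ br a := by simp [qQ]; ring
    have := le_PhiF br ha a
    rwa [h2] at this

lemma term_le_conj (f : B → EReal) (c b : B) :
    ((br c b : ℝ) : EReal) - f c ≤ intrinsicConj br f b :=
  le_iSup (fun c => ((br c b : ℝ) : EReal) - f c) c

lemma conj_le {f : B → EReal} {b : B} {x : EReal}
    (h : ∀ c, ((br c b : ℝ) : EReal) - f c ≤ x) : intrinsicConj br f b ≤ x :=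
  iSup_le h

lemma Theta_le_on_A {a : B} (ha : a ∈ A) :
    intrinsicConj br (PhiF br A) a ≤ ((qQ br a : ℝ) : EReal) := by
  refine conj_le br fun c => ?_
  have h1 : ((br c a - qQ br a : ℝ) : EReal) ≤ PhiF br A c := le_PhiF br ha c
  calc ((br c a : ℝ) : EReal) - PhiF br A c
      ≤ ((br c a : ℝ) : EReal) - ((br c a - qQ br a : ℝ) : EReal) :=
        EReal.sub_le_sub le_rfl h1
    _ = ((qQ br a : ℝ) : EReal) := by
        rw [← EReal.coe_sub]; norm_num

lemma PhiF_le_Theta (hsym : ∀ x y : B, br x y = br y x)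
    (hpos : ∀ b ∈ A, ∀ c ∈ A, 0 ≤ qQ br (b - c)) (b : B) :
    PhiF br A b ≤ intrinsicConj br (PhiF br A) b := by
  refine iSup₂_le fun a ha => ?_
  have := term_le_conj br (PhiF br A) a b
  rw [PhiF_on_A br hsym hpos ha] at this
  rw [hsym b a] at *
  calc ((br a b - qQ br a : ℝ) : EReal)
      = ((br a b : ℝ) : EReal) - ((qQ br a : ℝ) : EReal) := by rw [← EReal.coe_sub]
    _ ≤ _ := this

lemma q_le_Theta (hsym : ∀ x y : B, br x y = br y x)
    (hpos : ∀ b ∈ A, ∀ c ∈ A, 0 ≤ qQ br (b - c)) (hne : A.Nonempty) (b : B) :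
    ((qQ br b : ℝ) : EReal) ≤ intrinsicConj br (PhiF br A) b := by
  by_cases h : ((qQ br b : ℝ) : EReal) ≤ PhiF br A b
  · exact h.trans (PhiF_le_Theta br hsym hpos b)
  · push_neg at h
    have hnb : PhiF br A b ≠ ⊥ := PhiF_ne_bot br hne b
    have hnt : PhiF br A b ≠ ⊤ := fun ht => by simp [ht] at h
    set p := PhiF br A b with hp
    lift p to ℝ using ⟨hnt, hnb⟩ with r hr
    have hrq : r < qQ br b := EReal.coe_lt_coe_iff.1 h
    have := term_le_conj br (PhiF br A) b b
    rw [← hp] at this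
    calc ((qQ br b : ℝ) : EReal) ≤ ((br b b - r : ℝ) : EReal) := by
          rw [EReal.coe_le_coe_iff]
          have : br b b = 2 * qQ br b := by rw [qQ]; ring
          linarith
      _ = ((br b b : ℝ) : EReal) - (r : EReal) := by rw [← EReal.coe_sub]
      _ ≤ _ := this

lemma Theta_on_A (hsym : ∀ x y : B, br x y = br y x)
    (hpos : ∀ b ∈ A, ∀ c ∈ A, 0 ≤ qQ br (b - c)) (hne : A.Nonempty) {a : B} (ha : a ∈ A) :
    intrinsicConj br (PhiF br A) a = ((qQ br a : ℝ) : EReal) :=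
  le_antisymm (Theta_le_on_A br ha) (q_le_Theta br hsym hpos hne a)

lemma continuous_eval (hsym : ∀ x y : B, br x y = br y x) (c : B) :
    @Continuous B ℝ (weakTop br) _ (fun x => br c x) := by
  have : (fun x => br c x) = fun x => br x c := by
    funext x; exact hsym c x
  rw [this]
  exact continuous_iff_le_induced.2 (iInf_le _ c)

lemma LscW_Theta (hsym : ∀ x y : B, br x y = br y x) (hne : A.Nonempty) :
    @LowerSemicontinuous B EReal (weakTop br) _ (intrinsicConj br (PhiF br A)) := by
  letI : TopologicalSpace B := weakTop br
  have : intrinsicConj br (PhiF br A)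
      = fun b => ⨆ c : B, (((br c b : ℝ) : EReal) - PhiF br A c) := rfl
  rw [this]
  apply lowerSemicontinuous_iSup
  intro c
  by_cases hc : PhiF br A c = ⊤
  · have : (fun b : B => ((br c b : ℝ) : EReal) - PhiF br A c) = fun _ => (⊥ : EReal) := by
      funext b; rw [hc, EReal.sub_top]
    rw [this]
    exact lowerSemicontinuous_const
  · have hnb : PhiF br A c ≠ ⊥ := PhiF_ne_bot br hne c
    set p := PhiF br A c with hp
    lift p to ℝ using ⟨hc, hnb⟩ with r hr
    simp only [← EReal.coe_sub]
    apply Continuous.lowerSemicontinuous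
    exact continuous_coe_real_ereal.comp ((continuous_eval br hsym c).sub continuous_const)

lemma ConvexE_Theta (hne : A.Nonempty) :
    ∀ x y : B, ∀ α β : ℝ, 0 ≤ α → 0 ≤ β → α + β = 1 →
      intrinsicConj br (PhiF br A) (α • x + β • y)
        ≤ (α : EReal) * intrinsicConj br (PhiF br A) x
          + (β : EReal) * intrinsicConj br (PhiF br A) y := by
  intro x y α β ha hb hab
  refine conj_le br fun c => ?_
  by_cases hc : PhiF br A c = ⊤
  · rw [hc, EReal.sub_top]; exact bot_le
  · have hnb : PhiF br A c ≠ ⊥ := PhiF_ne_bot br hne c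
    set p := PhiF br A c with hp
    lift p to ℝ using ⟨hc, hnb⟩ with r hr
    have hterm : ∀ z : B, ((br c z : ℝ) : EReal) - PhiF br A c
        = ((br c z - r : ℝ) : EReal) := fun z => by rw [← hp, EReal.coe_sub]
    rw [show (((br c (α • x + β • y) : ℝ) : EReal) - (r : EReal))
        = ((br c (α • x + β • y) - r : ℝ) : EReal) from (EReal.coe_sub _ _).symm]
    have h1 : ((br c x - r : ℝ) : EReal) ≤ intrinsicConj br (PhiF br A) x := by
      rw [← hterm]; exact term_le_conj br _ c x
    have h2 : ((br c y - r : ℝ) : EReal) ≤ intrinsicConj br (PhiF br A) y := by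
      rw [← hterm]; exact term_le_conj br _ c y
    have heq : br c (α • x + β • y) - r = α * (br c x - r) + β * (br c y - r) := by
      rw [map_add, map_smul, map_smul]
      simp only [smul_eq_mul]
      linear_combination r * hab
    calc ((br c (α • x + β • y) - r : ℝ) : EReal)
        = ((α * (br c x - r) : ℝ) : EReal) + ((β * (br c y - r) : ℝ) : EReal) := by
          rw [← EReal.coe_add, heq]
      _ = (α : EReal) * ((br c x - r : ℝ) : EReal)
          + (β : EReal) * ((br c y - r : ℝ) : EReal) := by
          rw [EReal.coe_mul, EReal.coe_mul]
      _ ≤ _ := by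
          gcongr

lemma weakTop_eq_induced :
    weakTop br = TopologicalSpace.induced (fun x (y : B) => br x y) Pi.topologicalSpace := by
  rw [weakTop, Pi.topologicalSpace, induced_iInf]
  simp only [induced_compose]
  rfl

lemma dual_char (ψ : B →ₗ[ℝ] ℝ)
    (hψ : @Continuous B ℝ (weakTop br) _ ψ) :
    ∃ d : B, ∀ x, ψ x = br x d := by
  rw [weakTop] at hψ
  letI τ : TopologicalSpace B := ⨅ b : B, TopologicalSpace.induced (fun x => br x b) inferInstance
  set e : B → (B → ℝ) := fun x (y : B) => br x y with he
  have hmem : ψ ⁻¹' (Set.Ioo (-1 : ℝ) 1) ∈ 𝓝 (0 : B) := by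
    have h0 : ψ 0 = 0 := map_zero ψ
    have := hψ.continuousAt (x := (0 : B))
    have hIoo : Set.Ioo (-1 : ℝ) 1 ∈ 𝓝 (ψ 0) := by
      rw [h0]; exact Ioo_mem_nhds (by norm_num) (by norm_num)
    exact this.preimage_mem_nhds hIoo
  have htop : τ = TopologicalSpace.induced e Pi.topologicalSpace := weakTop_eq_induced br
  rw [htop, nhds_induced, Filter.mem_comap] at hmem
  obtain ⟨s, hs, hsub⟩ := hmem
  have he0 : e 0 = fun _ => (0 : ℝ) := by
    funext y; simp [he]
  rw [he0, nhds_pi, Filter.mem_pi] at hs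
  obtain ⟨I, hIfin, t, ht, htsub⟩ := hs
  haveI : Finite ↥I := hIfin.to_subtype
  have hker : ⨅ i : ↥I, LinearMap.ker (br.flip (i : B)) ≤ LinearMap.ker ψ := by
    intro x hx
    have hx0 : ∀ i ∈ I, br x i = 0 := by
      intro i hi
      have := (Submodule.mem_iInf _).1 hx ⟨i, hi⟩
      simpa [LinearMap.mem_ker, LinearMap.flip_apply] using this
    have hlam : ∀ lam : ℝ, |ψ (lam • x)| < 1 := by
      intro lam
      have hmem : e (lam • x) ∈ Set.pi I t := by
        intro i hi
        have : br (lam • x) i = 0 := by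
          simp [map_smul, hx0 i hi]
        simpa [he, this] using mem_of_mem_nhds (ht i)
      have := hsub (htsub hmem)
      rw [Set.mem_preimage, Set.mem_Ioo] at this
      rw [abs_lt]; exact this
    rw [LinearMap.mem_ker]
    by_contra h
    have := hlam (2 / ψ x)
    rw [map_smul, smul_eq_mul, div_mul_cancel₀ 2 h] at this
    norm_num at this
  have hspan := mem_span_of_iInf_ker_le_ker (L := fun i : ↥I => br.flip (i : B)) hker
  have hle : Submodule.span ℝ (Set.range fun i : ↥I => br.flip (i : B))
      ≤ LinearMap.range br.flip := by
    rw [Submodule.span_le]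
    rintro _ ⟨i, rfl⟩
    exact ⟨(i : B), rfl⟩
  obtain ⟨d, hd⟩ := hle hspan
  exact ⟨d, fun x => by rw [← hd]; rfl⟩

lemma sep (f : B → EReal)
    (hlsc : @LowerSemicontinuous B EReal (weakTop br) _ f)
    (hconv : ∀ x y : B, ∀ α β : ℝ, 0 ≤ α → 0 ≤ β → α + β = 1 →
      f (α • x + β • y) ≤ (α : EReal) * f x + (β : EReal) * f y)
    (hge : ∀ x, ((qQ br x : ℝ) : EReal) ≤ f x)
    (x₀ : B) (hx₀ : f x₀ ≠ ⊤)
    (z : B) (t : ℝ) (hzt : ((t : ℝ) : EReal) < f z) :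
    ∃ (d : B) (c u : ℝ), 0 ≤ c ∧ br z d + t * c < u ∧
      ∀ x s, f x ≤ ((s : ℝ) : EReal) → u < br x d + s * c := by
  classical
  set W := WeakBilin br with hW
  have htop : (WeakBilin.instTopologicalSpace br : TopologicalSpace W) = weakTop br :=
    (weakTop_eq_induced br).symm
  set S : Set (W × ℝ) := {p | f p.1 ≤ ((p.2 : ℝ) : EReal)} with hS
  have hfne_bot : ∀ x : B, f x ≠ ⊥ := fun x h =>
    (EReal.bot_lt_coe (qQ br x)).not_ge (h ▸ hge x)
  have hlscW : @LowerSemicontinuous W EReal _ _ f := by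
    rw [htop]; exact hlsc
  have hSclosed : IsClosed S := by
    rw [← isOpen_compl_iff, isOpen_iff_forall_mem_open]
    rintro ⟨x, s⟩ hp
    have hlt : ((s : ℝ) : EReal) < f x := not_le.1 hp
    obtain ⟨u, hsu, huf⟩ := EReal.lt_iff_exists_real_btwn.1 hlt
    refine ⟨{y : W | ((u : ℝ) : EReal) < f y} ×ˢ Iio u, ?_, ?_, ?_⟩
    · rintro ⟨y, v⟩ ⟨hy1, hy2⟩
      simp only [mem_compl_iff, hS, mem_setOf_eq, not_le]
      exact lt_trans (by exact_mod_cast hy2) hy1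
    · exact ((lowerSemicontinuous_iff_isOpen_preimage.1 hlscW) u).prod isOpen_Iio
    · exact ⟨by exact_mod_cast huf, by exact_mod_cast hsu⟩
  have hSconv : Convex ℝ S := by
    rintro ⟨x, sx⟩ hx ⟨y, sy⟩ hy a b ha hb hab
    simp only [hS, mem_setOf_eq] at hx hy ⊢
    have hxt : f x ≠ ⊤ := fun h => by rw [h] at hx; exact (EReal.coe_ne_top sx) (top_le_iff.1 hx)
    have hyt : f y ≠ ⊤ := fun h => by rw [h] at hy; exact (EReal.coe_ne_top sy) (top_le_iff.1 hy)
    set rx := (f x).toReal with hrx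
    set ry := (f y).toReal with hry
    have hfx : f x = ((rx : ℝ) : EReal) := (EReal.coe_toReal hxt (hfne_bot x)).symm
    have hfy : f y = ((ry : ℝ) : EReal) := (EReal.coe_toReal hyt (hfne_bot y)).symm
    have hrxle : rx ≤ sx := EReal.coe_le_coe_iff.1 (hfx ▸ hx)
    have hryle : ry ≤ sy := EReal.coe_le_coe_iff.1 (hfy ▸ hy)
    show f (a • x + b • y) ≤ (((a • (x, sx) + b • (y, sy) : W × ℝ).2 : ℝ) : EReal)
    have hsnd : (a • ((x, sx) : W × ℝ) + b • (y, sy)).2 = a * sx + b * sy := rfl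
    rw [hsnd]
    calc f (a • x + b • y) ≤ (a : EReal) * f x + (b : EReal) * f y :=
          hconv x y a b ha hb hab
      _ = ((a * rx + b * ry : ℝ) : EReal) := by
          rw [hfx, hfy, ← EReal.coe_mul, ← EReal.coe_mul, ← EReal.coe_add]
      _ ≤ ((a * sx + b * sy : ℝ) : EReal) := by
          rw [EReal.coe_le_coe_iff]
          have := mul_le_mul_of_nonneg_left hrxle ha
          have := mul_le_mul_of_nonneg_left hryle hb
          linarith
  have hnotmem : ((z, t) : W × ℝ) ∉ S := by
    simp only [hS, mem_setOf_eq, not_le]; exact hzt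
  obtain ⟨φ, u, hu1, hu2⟩ := geometric_hahn_banach_point_closed hSconv hSclosed hnotmem
  set cφ : ℝ := φ (0, 1) with hcφ
  set ψ : W →L[ℝ] ℝ := φ.comp (ContinuousLinearMap.inl ℝ W ℝ) with hψ
  have hdecomp : ∀ (x : W) (s : ℝ), φ (x, s) = ψ x + s * cφ := by
    intro x s
    have hxs : ((x, s) : W × ℝ) = ((x, 0) : W × ℝ) + s • ((0 : W), (1 : ℝ)) := by
      simp [Prod.ext_iff]
    rw [hxs, map_add, map_smul, smul_eq_mul]
    rfl
  have hψcont : @Continuous B ℝ (weakTop br) _ (ψ.toLinearMap : B →ₗ[ℝ] ℝ) := by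
    rw [← htop]; exact ψ.continuous
  obtain ⟨d, hd⟩ := dual_char br ψ.toLinearMap hψcont
  have hd' : ∀ x : B, ψ x = br x d := hd
  set t₀ := (f x₀).toReal with ht₀
  have hfx₀ : f x₀ = ((t₀ : ℝ) : EReal) := (EReal.coe_toReal hx₀ (hfne_bot x₀)).symm
  have hmemS : ∀ s : ℝ, t₀ ≤ s → ((x₀, s) : W × ℝ) ∈ S := by
    intro s hs
    simp only [hS, mem_setOf_eq, hfx₀]
    exact_mod_cast hs
  have hcpos : 0 ≤ cφ := by
    by_contra h
    push_neg at h
    set s := max t₀ ((u - br x₀ d) / cφ + 1) with hs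
    have h1 : u < br x₀ d + s * cφ := (hu2 _ (hmemS s (le_max_left _ _))).trans_eq
      ((hdecomp x₀ s).trans (congrArg (· + s * cφ) (hd' x₀)))
    have h2 : (u - br x₀ d) / cφ + 1 ≤ s := le_max_right _ _
    have h3 : s * cφ ≤ ((u - br x₀ d) / cφ + 1) * cφ := by
      exact mul_le_mul_of_nonpos_right h2 h.le
    have h4 : ((u - br x₀ d) / cφ + 1) * cφ = (u - br x₀ d) + cφ := by
      rw [add_mul, one_mul, div_mul_cancel₀ _ (ne_of_lt h)]
    linarith
  refine ⟨d, cφ, u, hcpos, ?_, ?_⟩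
  · have := hu1
    exact ((hdecomp z t).trans (congrArg (· + t * cφ) (hd' z))).symm.trans_lt this
  · intro x s hxs
    have : ((x, s) : W × ℝ) ∈ S := hxs
    have := hu2 _ this
    exact this.trans_eq ((hdecomp x s).trans (congrArg (· + s * cφ) (hd' x)))

lemma minor_of_pos (f : B → EReal)
    (hfne_bot : ∀ x : B, f x ≠ ⊥) {d : B} {c u : ℝ}
    (h2 : ∀ x s, f x ≤ ((s : ℝ) : EReal) → u < br x d + s * c) (hc : 0 < c) :
    ∀ x : B, ((br x ((-c⁻¹) • d) + u / c : ℝ) : EReal) ≤ f x := by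
  intro x
  by_cases hxt : f x = ⊤
  · rw [hxt]; exact le_top
  · set s := (f x).toReal with hs
    have hfx : f x = ((s : ℝ) : EReal) := (EReal.coe_toReal hxt (hfne_bot x)).symm
    have := h2 x s hfx.le
    rw [hfx, EReal.coe_le_coe_iff]
    have hval : br x ((-c⁻¹) • d) + u / c = (u - br x d) / c := by
      rw [map_smul, smul_eq_mul]
      field_simp
      ring
    rw [hval, div_le_iff₀ hc]
    nlinarith

lemma exists_affine_minorant (f : B → EReal)
    (hlsc : @LowerSemicontinuous B EReal (weakTop br) _ f)
    (hconv : ∀ x y : B, ∀ α β : ℝ, 0 ≤ α → 0 ≤ β → α + β = 1 →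
      f (α • x + β • y) ≤ (α : EReal) * f x + (β : EReal) * f y)
    (hge : ∀ x, ((qQ br x : ℝ) : EReal) ≤ f x)
    (x₀ : B) (hx₀ : f x₀ ≠ ⊤)
    (b : B) (hb : ((qQ br b : ℝ) : EReal) < f b) :
    ∃ (d : B) (β : ℝ), (∀ x : B, ((br x d + β : ℝ) : EReal) ≤ f x) ∧
      qQ br b < br b d + β := by
  have hfne_bot : ∀ x : B, f x ≠ ⊥ := fun x h =>
    (EReal.bot_lt_coe (qQ br x)).not_ge (h ▸ hge x)
  obtain ⟨d, c, u, hc, h1, h2⟩ := sep br f hlsc hconv hge x₀ hx₀ b (qQ br b) hb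
  rcases lt_or_eq_of_le hc with hcpos | hczero
  · refine ⟨(-c⁻¹) • d, u / c, minor_of_pos br f hfne_bot h2 hcpos, ?_⟩
    have hval : br b ((-c⁻¹) • d) + u / c = (u - br b d) / c := by
      rw [map_smul, smul_eq_mul]; field_simp; ring
    rw [hval, lt_div_iff₀ hcpos]
    nlinarith
  · rw [← hczero] at h1 h2
    simp only [mul_zero, add_zero] at h1 h2
    set t₀ := (f x₀).toReal with ht₀
    have hfx₀ : f x₀ = ((t₀ : ℝ) : EReal) := (EReal.coe_toReal hx₀ (hfne_bot x₀)).symm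
    have hzt2 : (((t₀ - 1 : ℝ)) : EReal) < f x₀ := by
      rw [hfx₀, EReal.coe_lt_coe_iff]; linarith
    obtain ⟨d₀, c₀, u₀, hc₀, h1₀, h2₀⟩ := sep br f hlsc hconv hge x₀ hx₀ x₀ (t₀ - 1) hzt2
    have hmid : u₀ < br x₀ d₀ + t₀ * c₀ := h2₀ x₀ t₀ hfx₀.le
    have hc₀pos : 0 < c₀ := by nlinarith
    set m := (-c₀⁻¹) • d₀ with hm
    set β₀ := u₀ / c₀ with hβ₀
    have hminor : ∀ x : B, ((br x m + β₀ : ℝ) : EReal) ≤ f x :=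
      minor_of_pos br f hfne_bot h2₀ hc₀pos
    have hub : 0 < u - br b d := by linarith
    set lam := max 0 ((qQ br b - (br b m + β₀)) / (u - br b d) + 1) with hlam
    have hlam0 : 0 ≤ lam := le_max_left _ _
    refine ⟨m - lam • d, β₀ + lam * u, ?_, ?_⟩
    · intro x
      by_cases hxt : f x = ⊤
      · rw [hxt]; exact le_top
      · set s := (f x).toReal with hs
        have hfx : f x = ((s : ℝ) : EReal) := (EReal.coe_toReal hxt (hfne_bot x)).symm
        have hud : u < br x d := h2 x s hfx.le
        have hmx : br x m + β₀ ≤ s := by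
          have := hminor x
          rw [hfx, EReal.coe_le_coe_iff] at this
          exact this
        rw [hfx, EReal.coe_le_coe_iff]
        have hexp : br x (m - lam • d) + (β₀ + lam * u)
            = (br x m + β₀) + lam * (u - br x d) := by
          simp only [map_sub, map_smul, smul_eq_mul]; ring
        rw [hexp]
        nlinarith
    · have hexp : br b (m - lam • d) + (β₀ + lam * u)
          = (br b m + β₀) + lam * (u - br b d) := by
        simp only [map_sub, map_smul, smul_eq_mul]; ring
      rw [hexp]
      have hlam_ge : (qQ br b - (br b m + β₀)) / (u - br b d) + 1 ≤ lam := le_max_right _ _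
      have := mul_le_mul_of_nonneg_right hlam_ge hub.le
      rw [add_mul, one_mul, div_mul_cancel₀ _ (ne_of_gt hub)] at this
      nlinarith

end Aux

/-- A is q-representable iff P_q(Φ_A^@) ⊆ A. -/
theorem stmt2 [Nontrivial B] (br : B →ₗ[ℝ] B →ₗ[ℝ] ℝ)
    (hsym : ∀ x y : B, br x y = br y x)
    (A : Set B) (hA : IsQPositive br A) :
    IsQRepresentable br A ↔ PqSet br (intrinsicConj br (PhiF br A)) ⊆ A := by
  obtain ⟨hne, hpos⟩ := hA
  constructor
  · rintro ⟨f, hlsc, hconv, ⟨x₀, hx₀⟩, hge, hPq⟩ b hb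
    by_contra hbA
    have hfb : ((qQ br b : ℝ) : EReal) < f b := by
      refine lt_of_le_of_ne (hge b) fun h => hbA ?_
      rw [← hPq]
      exact h.symm
    obtain ⟨d, β, hmin, hlt⟩ :=
      exists_affine_minorant br f hlsc hconv hge x₀ hx₀ b hfb
    have hPhi : PhiF br A d ≤ ((-β : ℝ) : EReal) := by
      refine iSup₂_le fun a ha => ?_
      have hfa : f a = ((qQ br a : ℝ) : EReal) := by
        rw [← hPq] at ha
        exact ha
      have hma := hmin a
      rw [hfa, EReal.coe_le_coe_iff] at hma
      rw [EReal.coe_le_coe_iff]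
      have := hsym d a
      linarith
    have hb' : intrinsicConj br (PhiF br A) b = ((qQ br b : ℝ) : EReal) := hb
    have hcontr : ((qQ br b : ℝ) : EReal) < intrinsicConj br (PhiF br A) b := by
      calc ((qQ br b : ℝ) : EReal) < ((br b d + β : ℝ) : EReal) :=
            EReal.coe_lt_coe_iff.2 hlt
        _ = ((br d b : ℝ) : EReal) - ((-β : ℝ) : EReal) := by
            rw [← EReal.coe_sub, hsym d b]; norm_num
        _ ≤ ((br d b : ℝ) : EReal) - PhiF br A d := EReal.sub_le_sub le_rfl hPhi
        _ ≤ intrinsicConj br (PhiF br A) b := term_le_conj br _ d b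
    rw [hb'] at hcontr
    exact lt_irrefl _ hcontr
  · intro hsub
    refine ⟨intrinsicConj br (PhiF br A), LscW_Theta br hsym hne,
      ConvexE_Theta br hne, ⟨hne.choose, ?_⟩, q_le_Theta br hsym hpos hne, ?_⟩
    · rw [Theta_on_A br hsym hpos hne hne.choose_spec]
      exact EReal.coe_ne_top _
    · exact Set.Subset.antisymm hsub fun a ha =>
        (Theta_on_A br hsym hpos hne ha : _)
end
end

section
/- Let A be a q-positive subset of an SSD space B. Then A ⊆ P_q(Φ_A^@) ⊆ G_{Φ_A} ⊆ A^π ∩ cl_w(conv A), where conv A is the convex hull of A and cl_w denotes closure in the w(B,B) topology. -/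
noncomputable section

variable {B : Type*} [AddCommGroup B] [Module ℝ B]

-- auxiliary lemmas

lemma ereal_coe_sub_le (x z : ℝ) (y : EReal) (h : ((x - z : ℝ):EReal) ≤ y) :
    (x:EReal) - y ≤ (z:EReal) := by
  induction y using EReal.rec with
  | bot => exact absurd (le_bot_iff.mp h) (EReal.coe_ne_bot _)
  | coe y =>
    rw [← EReal.coe_sub]; exact_mod_cast by linarith [EReal.coe_le_coe_iff.mp h]
  | top => simp

lemma qsub (br : B →ₗ[ℝ] B →ₗ[ℝ] ℝ) (hsym : ∀ x y : B, br x y = br y x) (b c : B) :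
    qQ br (b - c) = qQ br b + qQ br c - br b c := by
  simp only [qQ, map_sub, LinearMap.sub_apply]
  rw [hsym c b]; ring

lemma phiF_ge (br : B →ₗ[ℝ] B →ₗ[ℝ] ℝ) (A : Set B) {a : B} (ha : a ∈ A) (x : B) :
    ((br x a - qQ br a : ℝ) : EReal) ≤ PhiF br A x :=
  le_iSup₂ (f := fun a (_ : a ∈ A) => ((br x a - qQ br a : ℝ) : EReal)) a ha

lemma brself (br : B →ₗ[ℝ] B →ₗ[ℝ] ℝ) (a : B) : br a a - qQ br a = qQ br a := by
  simp [qQ]; ring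

lemma phi_on_A (br : B →ₗ[ℝ] B →ₗ[ℝ] ℝ) (hsym : ∀ x y : B, br x y = br y x)
    {A : Set B} (hA : IsQPositive br A) {a : B} (ha : a ∈ A) :
    PhiF br A a = ((qQ br a : ℝ) : EReal) := by
  apply le_antisymm
  · refine iSup₂_le fun c hc => EReal.coe_le_coe_iff.mpr ?_
    have h := hA.2 a ha c hc
    rw [qsub br hsym a c] at h; linarith
  · have h := phiF_ge br A ha a
    rwa [brself br a] at h

lemma conj_ge (br : B →ₗ[ℝ] B →ₗ[ℝ] ℝ) (f : B → EReal) (c b : B) :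
    ((br c b : ℝ) : EReal) - f c ≤ intrinsicConj br f b :=
  le_iSup (fun c => ((br c b : ℝ) : EReal) - f c) c

lemma conj_on_A (br : B →ₗ[ℝ] B →ₗ[ℝ] ℝ) (hsym : ∀ x y : B, br x y = br y x)
    {A : Set B} (hA : IsQPositive br A) {a : B} (ha : a ∈ A) :
    intrinsicConj br (PhiF br A) a = ((qQ br a : ℝ) : EReal) := by
  apply le_antisymm
  · exact iSup_le fun c => ereal_coe_sub_le _ _ _ (phiF_ge br A ha c)
  · have h := conj_ge br (PhiF br A) a a
    rw [phi_on_A br hsym hA ha, ← EReal.coe_sub, brself br a] at h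
    exact h

lemma phi_le_conj (br : B →ₗ[ℝ] B →ₗ[ℝ] ℝ) (hsym : ∀ x y : B, br x y = br y x)
    {A : Set B} (hA : IsQPositive br A) (x : B) :
    PhiF br A x ≤ intrinsicConj br (PhiF br A) x := by
  refine iSup₂_le fun a ha => ?_
  have h := conj_ge br (PhiF br A) a x
  rw [phi_on_A br hsym hA ha, ← EReal.coe_sub] at h
  rw [hsym x a]
  exact h


/-- A ⊆ P_q(Φ_A^@) ⊆ G_{Φ_A} ⊆ A^π ∩ cl_w(conv A). -/
theorem stmt7 [Nontrivial B] (br : B →ₗ[ℝ] B →ₗ[ℝ] ℝ)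
    (hsym : ∀ x y : B, br x y = br y x)
    (A : Set B) (hA : IsQPositive br A) :
    A ⊆ PqSet br (intrinsicConj br (PhiF br A)) ∧
    PqSet br (intrinsicConj br (PhiF br A)) ⊆ GSet br (PhiF br A) ∧
    GSet br (PhiF br A) ⊆
      qPi br A ∩ @closure B (weakTop br) (convexHull ℝ A) := by
  classical
  obtain ⟨a₀, ha₀⟩ := hA.1
  refine ⟨fun a ha => conj_on_A br hsym hA ha, ?_, ?_⟩
  · -- PqSet ⊆ GSet
    intro b hb
    have hb' : intrinsicConj br (PhiF br A) b = ((qQ br b : ℝ) : EReal) := hb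
    have h1 : PhiF br A b ≤ ((qQ br b : ℝ) : EReal) :=
      (phi_le_conj br hsym hA b).trans (le_of_eq hb')
    have hne_bot : PhiF br A b ≠ ⊥ := by
      intro h
      have := phiF_ge br A ha₀ b
      rw [h] at this
      exact EReal.coe_ne_bot _ (le_bot_iff.mp this)
    have hne_top : PhiF br A b ≠ ⊤ :=
      fun h => by simp [h] at h1
    set r := (PhiF br A b).toReal with hr
    have hreq : PhiF br A b = (r : EReal) := (EReal.coe_toReal hne_top hne_bot).symm
    have h2 : ((br b b - r : ℝ) : EReal) ≤ ((qQ br b : ℝ) : EReal) := by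
      have h := conj_ge br (PhiF br A) b b
      rw [hreq, ← EReal.coe_sub, hb'] at h
      exact h
    have h2' : br b b - r ≤ qQ br b := EReal.coe_le_coe_iff.mp h2
    have h1' : r ≤ qQ br b := by
      rw [hreq] at h1; exact EReal.coe_le_coe_iff.mp h1
    have hq : (2:ℝ) * qQ br b = br b b := by simp only [qQ]; ring
    have hrq : r = qQ br b := by linarith
    show PhiF br A b + intrinsicConj br (PhiF br A) b = ((br b b : ℝ) : EReal)
    rw [hreq, hb', hrq, ← EReal.coe_add]
    norm_cast
    linarith
  · -- GSet ⊆ qPi ∩ closure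
    intro b hb
    have hbeq : PhiF br A b + intrinsicConj br (PhiF br A) b = ((br b b : ℝ) : EReal) := hb
    have hne_bot : PhiF br A b ≠ ⊥ := by
      intro h
      have := phiF_ge br A ha₀ b
      rw [h] at this
      exact EReal.coe_ne_bot _ (le_bot_iff.mp this)
    have hne_top : PhiF br A b ≠ ⊤ := by
      intro h
      have hc : intrinsicConj br (PhiF br A) b = ⊤ :=
        top_le_iff.mp (h ▸ phi_le_conj br hsym hA b)
      rw [h, hc] at hbeq
      simp at hbeq
    set r := (PhiF br A b).toReal with hrdef
    have hreq : PhiF br A b = (r : EReal) := (EReal.coe_toReal hne_top hne_bot).symm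
    have hsne_bot : intrinsicConj br (PhiF br A) b ≠ ⊥ := by
      intro h
      rw [hreq, h] at hbeq
      simp at hbeq
    have hsne_top : intrinsicConj br (PhiF br A) b ≠ ⊤ := by
      intro h
      rw [hreq, h] at hbeq
      simp at hbeq
    set s := (intrinsicConj br (PhiF br A) b).toReal with hsdef
    have hseq : intrinsicConj br (PhiF br A) b = (s : EReal) :=
      (EReal.coe_toReal hsne_top hsne_bot).symm
    have hrs : r + s = br b b := by
      rw [hreq, hseq, ← EReal.coe_add] at hbeq
      exact_mod_cast hbeq
    have hrles : r ≤ s := by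
      have := phi_le_conj br hsym hA b
      rw [hreq, hseq] at this
      exact_mod_cast this
    have hq : (2:ℝ) * qQ br b = br b b := by simp only [qQ]; ring
    have hrq : r ≤ qQ br b := by linarith
    have hphile : ∀ a ∈ A, br b a - qQ br a ≤ r := by
      intro a ha
      have := phiF_ge br A ha b
      rw [hreq] at this
      exact_mod_cast this
    constructor
    · -- qPi
      intro a ha
      rw [qsub br hsym b a]
      have := hphile a ha
      linarith
    · -- closure
      -- key lemma: cannot separate
      have hkey : ∀ d : B, ∀ β : ℝ, 0 < β → ¬(∀ a ∈ A, br a d ≤ br b d - β) := by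
        intro d β hβ hsep
        have hub : PhiF br A (b + d) ≤ ((r + (br b d - β) : ℝ) : EReal) := by
          refine iSup₂_le fun a ha => EReal.coe_le_coe_iff.mpr ?_
          have h1 : br (b + d) a = br b a + br a d := by
            rw [map_add, LinearMap.add_apply, hsym d a]
          have h2 := hphile a ha
          have h3 := hsep a ha
          rw [h1]; linarith
        have hlb : PhiF br A (b + d) ≠ ⊥ := by
          intro h
          have := phiF_ge br A ha₀ (b + d)
          rw [h] at this
          exact EReal.coe_ne_bot _ (le_bot_iff.mp this)
        have hne_top' : PhiF br A (b + d) ≠ ⊤ := by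
          intro h
          rw [h, top_le_iff] at hub
          exact EReal.coe_ne_top _ hub
        set r' := (PhiF br A (b + d)).toReal
        have hr'eq : PhiF br A (b + d) = (r' : EReal) := (EReal.coe_toReal hne_top' hlb).symm
        have hr'le : r' ≤ r + (br b d - β) := by
          rw [hr'eq] at hub; exact_mod_cast hub
        have hs' : ((br (b + d) b - r' : ℝ) : EReal) ≤ (s : EReal) := by
          have h := conj_ge br (PhiF br A) (b + d) b
          rw [hr'eq, ← EReal.coe_sub, hseq] at h
          exact h
        have hs'' : br (b + d) b - r' ≤ s := EReal.coe_le_coe_iff.mp hs'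
        have hbd : br (b + d) b = br b b + br b d := by
          rw [map_add, LinearMap.add_apply, hsym d b]
        rw [hbd] at hs''
        linarith
      -- suppose b not in closure
      letI : TopologicalSpace B := weakTop br
      by_contra hcl
      set S := convexHull ℝ A with hS
      have hbO : b ∈ (closure S)ᶜ := hcl
      have hOopen : IsOpen (closure S)ᶜ := (isClosed_closure (s := S)).isOpen_compl
      have hmem : (closure S)ᶜ ∈ nhds b := hOopen.mem_nhds hbO
      have hnhds : (nhds b : Filter B)
          = ⨅ c : B, Filter.comap (fun x => br x c) (nhds (br b c)) := by
        show @nhds B (⨅ c : B, TopologicalSpace.induced (fun x => br x c) inferInstance) b = _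
        rw [nhds_iInf]
        exact iInf_congr fun c => nhds_induced _ _
      rw [hnhds] at hmem
      rw [Filter.mem_iInf] at hmem
      obtain ⟨I, hIfin, V, hV, hInt⟩ := hmem
      haveI : Fintype I := hIfin.fintype
      choose t htmem htsub using fun i : I => Filter.mem_comap.mp (hV i)
      choose ε hεpos hball using fun i : I => Metric.mem_nhds_iff.mp (htmem i)
      have hSA : A ⊆ S := subset_convexHull ℝ A
      have hnotin : ∀ x ∈ S, ∃ i : I, ε i ≤ |br x (i : B) - br b (i : B)| := by
        intro x hx
        by_contra hno
        push_neg at hno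
        have hxO : x ∈ (closure S)ᶜ := by
          rw [hInt]
          refine Set.mem_iInter.mpr fun i => ?_
          apply htsub i
          show br x (i : B) ∈ t i
          apply hball i
          rw [Metric.mem_ball, Real.dist_eq]
          exact hno i
        exact hxO (subset_closure hx)
      cases isEmpty_or_nonempty I with
      | inl hempty =>
        obtain ⟨i, _⟩ := hnotin a₀ (hSA ha₀)
        exact hempty.false i
      | inr hne =>
        -- finite-dimensional separation
        set T : B →ₗ[ℝ] (I → ℝ) := LinearMap.pi (fun i : I => br.flip (i : B)) with hT
        have hTapp : ∀ x : B, ∀ i : I, T x i = br x (i : B) := fun x i => rfl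
        set K := T '' S with hK
        have hKconv : Convex ℝ K := (convex_convexHull ℝ A).linear_image T
        have hεm : ∃ δ : ℝ, 0 < δ ∧ ∀ i : I, δ ≤ ε i := by
          haveI : Nonempty I := hne
          refine ⟨Finset.univ.inf' Finset.univ_nonempty ε, ?_, fun i => Finset.inf'_le ε (Finset.mem_univ i)⟩
          rw [Finset.lt_inf'_iff]
          exact fun i _ => hεpos i
        obtain ⟨δ, hδpos, hδle⟩ := hεm
        have hpK : T b ∉ closure K := by
          intro hmemK
          rw [Metric.mem_closure_iff] at hmemK
          obtain ⟨y, hyK, hdist⟩ := hmemK δ hδpos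
          obtain ⟨x, hxS, rfl⟩ := hyK
          obtain ⟨i, hi⟩ := hnotin x hxS
          have h1 : dist (T b i) (T x i) ≤ dist (T b) (T x) := dist_le_pi_dist _ _ i
          rw [Real.dist_eq, hTapp, hTapp, abs_sub_comm] at h1
          have := hδle i
          linarith
        obtain ⟨f, u, hfb, hfy⟩ :=
          geometric_hahn_banach_point_closed (hKconv.closure) isClosed_closure hpK
        -- representation of f
        have hfrep : ∀ x : B, f (T x) = br x (∑ i : I, f (Pi.single i 1 : I → ℝ) • (i : B)) := by
          intro x
          rw [map_sum]
          have : f (T x) = ∑ j : I, (T x) j * f (Pi.single j 1 : I → ℝ) := by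
            conv_lhs => rw [show (T x : I → ℝ) = ∑ j, (T x) j • (Pi.single j 1 : I → ℝ) by
              ext i; simp [Finset.sum_apply, Pi.single_apply]]
            rw [map_sum]
            simp [smul_eq_mul]
          rw [this]
          refine Finset.sum_congr rfl fun j _ => ?_
          rw [map_smul, hTapp]
          simp [smul_eq_mul, mul_comm]
        set d : B := ∑ i : I, f (Pi.single i 1 : I → ℝ) • (i : B) with hd
        have hbru : br b d < u := by rw [← hfrep b]; exact hfb
        have hbra : ∀ a ∈ A, u < br a d := by
          intro a ha
          rw [← hfrep a]
          exact hfy (T a) (subset_closure ⟨a, hSA ha, rfl⟩)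
        -- apply key lemma with d' = -d, β = u - br b d
        refine hkey (-d) (u - br b d) (by linarith) ?_
        intro a ha
        have h1 := hbra a ha
        have h2 : br a (-d) = -(br a d) := by rw [map_neg]
        have h3 : br b (-d) = -(br b d) := by rw [map_neg]
        rw [h2, h3]
        linarith
end
end
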